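/- Let (Ω₁,μ₁) and (Ω₂,μ₂) be (σ-finite) measure spaces, let f ∈ L(∞,∞)(Ω₁) and g ∈ L^∞(Ω₂), and define (f⊗g)(x,y) = f(x)g(y) on the product measure space Ω₁ × Ω₂. Then f⊗g ∈ L(∞,∞)(Ω₁ × Ω₂) and ‖f⊗g‖_{L(∞,∞)(Ω₁×Ω₂)} ≤ ‖f‖_{L(∞,∞)(Ω₁)} · ‖g‖_{L^∞(Ω₂)}. -/

import Mathlib

open MeasureTheory Set
open scoped ENNReal NNReal

noncomputable section

/-- The distribution function `λ_f(t) = μ {x : |f(x)| > t}`. -/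
def distFun {α : Type*} [MeasurableSpace α] (μ : Measure α) (f : α → ℝ) (t : ℝ) : ℝ≥0∞ :=
  μ {x | t < |f x|}

/-- The non-increasing rearrangement `f*(t) = inf {s > 0 : λ_f(s) ≤ t}`. -/
def rearr {α : Type*} [MeasurableSpace α] (μ : Measure α) (f : α → ℝ) (t : ℝ) : ℝ≥0∞ :=
  sInf (ENNReal.ofReal '' {s : ℝ | 0 < s ∧ distFun μ f s ≤ ENNReal.ofReal t})

/-- The maximal function `f**(t) = (1/t) ∫₀ᵗ f*(s) ds`. -/
def dstar {α : Type*} [MeasurableSpace α] (μ : Measure α) (f : α → ℝ) (t : ℝ) : ℝ≥0∞ :=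
  (∫⁻ s in Set.Ioc (0 : ℝ) t, rearr μ f s) / ENNReal.ofReal t

/-- The `L(∞,∞)` "norm" : `sup_{t>0} (f**(t) - f*(t))`. -/
def oscNorm {α : Type*} [MeasurableSpace α] (μ : Measure α) (f : α → ℝ) : ℝ≥0∞ :=
  ⨆ (t : ℝ) (_ : 0 < t), dstar μ f t - rearr μ f t

/-- The Marcinkiewicz `L(p,∞)` quasinorm `‖f‖*_{L(p,∞)} = sup_{t>0} t (λ_f(t))^{1/p}`. -/
def wkNorm {α : Type*} [MeasurableSpace α] (μ : Measure α) (p : ℝ) (f : α → ℝ) : ℝ≥0∞ :=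
  ⨆ (t : ℝ) (_ : 0 < t), ENNReal.ofReal t * distFun μ f t ^ (1 / p)

/-- `‖f‖_{L(p,∞)} = sup_{s>0} s^{1/p} f**(s)`. -/
def wkNormStarStar {α : Type*} [MeasurableSpace α] (μ : Measure α) (p : ℝ) (f : α → ℝ) : ℝ≥0∞ :=
  ⨆ (s : ℝ) (_ : 0 < s), ENNReal.ofReal s ^ (1 / p) * dstar μ f s

/-- `‖f‖*_{L(p,∞)} = sup_{s>0} s^{1/p} f*(s)` (rearrangement form). -/
def wkNormStar {α : Type*} [MeasurableSpace α] (μ : Measure α) (p : ℝ) (f : α → ℝ) : ℝ≥0∞ :=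
  ⨆ (s : ℝ) (_ : 0 < s), ENNReal.ofReal s ^ (1 / p) * rearr μ f s

/-- `‖f‖^#_{L(p,∞)} = sup_{s>0} s^{1/p} (f**(s) - f*(s))`. -/
def sharpNorm {α : Type*} [MeasurableSpace α] (μ : Measure α) (p : ℝ) (f : α → ℝ) : ℝ≥0∞ :=
  ⨆ (s : ℝ) (_ : 0 < s), ENNReal.ofReal s ^ (1 / p) * (dstar μ f s - rearr μ f s)

/-- `‖f‖^{##}_{L(p,∞)} = sup_{t>0} (λ_f(t))^{-(1-1/p)} ∫_t^∞ λ_f(s) ds`. -/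
def sharpSharpNorm {α : Type*} [MeasurableSpace α] (μ : Measure α) (p : ℝ) (f : α → ℝ) : ℝ≥0∞ :=
  ⨆ (t : ℝ) (_ : 0 < t),
    distFun μ f t ^ (-(1 - 1 / p)) * ∫⁻ s in Set.Ioi t, distFun μ f s

/-- `‖f‖^{##}_{L(∞,∞)} = inf {C : ∫_t^∞ λ_f(s) ds ≤ C λ_f(t) for all t > 0}`. -/
def sharpSharpInf {α : Type*} [MeasurableSpace α] (μ : Measure α) (f : α → ℝ) : ℝ≥0∞ :=
  sInf {C : ℝ≥0∞ | ∀ t : ℝ, 0 < t →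
    ∫⁻ s in Set.Ioi t, distFun μ f s ≤ C * distFun μ f t}

/-- O'Neil's quantity `inf {C^{1/p} : ∫_t^∞ λ_f(s) ds ≤ C t^{1-p} for all t > 0}`. -/
def oneilQuantity {α : Type*} [MeasurableSpace α] (μ : Measure α) (p : ℝ) (f : α → ℝ) : ℝ≥0∞ :=
  sInf {D : ℝ≥0∞ | ∃ C : ℝ≥0∞, D = C ^ (1 / p) ∧
    ∀ t : ℝ, 0 < t → ∫⁻ s in Set.Ioi t, distFun μ f s ≤ C * ENNReal.ofReal t ^ (1 - p)}

/-- A cube in `ℝⁿ` with sides parallel to the coordinate axes. -/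
def IsCube {n : ℕ} (Q : Set (Fin n → ℝ)) : Prop :=
  ∃ (a : Fin n → ℝ) (l : ℝ), 0 < l ∧ Q = Set.univ.pi fun i => Set.Icc (a i) (a i + l)

/-- A countable family of subcubes of `Q₀` with pairwise disjoint interiors. -/
def IsPackingIn {n : ℕ} (Q₀ : Set (Fin n → ℝ)) (Q : ℕ → Set (Fin n → ℝ)) : Prop :=
  (∀ i, IsCube (Q i) ∧ Q i ⊆ Q₀) ∧
    Pairwise fun i j => interior (Q i) ∩ interior (Q j) = ∅

/-- The average `f_Q = (1/|Q|) ∫_Q f`. -/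
def cubeAvg {n : ℕ} (f : (Fin n → ℝ) → ℝ) (Q : Set (Fin n → ℝ)) : ℝ :=
  ⨍ x in Q, f x

/-- The mean oscillation `(1/|Q|) ∫_Q |f - f_Q|`. -/
def meanOsc {n : ℕ} (f : (Fin n → ℝ) → ℝ) (Q : Set (Fin n → ℝ)) : ℝ :=
  ⨍ x in Q, |f x - cubeAvg f Q|

/-- The John–Nirenberg functional `JN_p(f,Q₀)`. -/
def JN {n : ℕ} (p : ℝ) (f : (Fin n → ℝ) → ℝ) (Q₀ : Set (Fin n → ℝ)) : ℝ≥0∞ :=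
  ⨆ (Q : ℕ → Set (Fin n → ℝ)) (_ : IsPackingIn Q₀ Q),
    (∑' i, volume (Q i) * ENNReal.ofReal (meanOsc f (Q i)) ^ p) ^ (1 / p)

/-- The BMO norm `‖f‖_{BMO(Q₀)}`. -/
def bmoNorm {n : ℕ} (f : (Fin n → ℝ) → ℝ) (Q₀ : Set (Fin n → ℝ)) : ℝ≥0∞ :=
  ⨆ (Q : Set (Fin n → ℝ)) (_ : IsCube Q ∧ Q ⊆ Q₀), ENNReal.ofReal (meanOsc f Q)

/-- The Garsia–Rodemich functional `GaRo_p(f,Q₀)`: the least constant `C` such that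
for every packing `{Qᵢ}` of `Q₀`,
`Σᵢ (1/|Qᵢ|) ∫_{Qᵢ}∫_{Qᵢ} |f(x)-f(y)| dx dy ≤ C (Σᵢ |Qᵢ|)^{1/p'}` where `1/p' = 1 - 1/p`. -/
def GaRo {n : ℕ} (p : ℝ) (f : (Fin n → ℝ) → ℝ) (Q₀ : Set (Fin n → ℝ)) : ℝ≥0∞ :=
  sInf {C : ℝ≥0∞ | ∀ Q : ℕ → Set (Fin n → ℝ), IsPackingIn Q₀ Q →
    (∑' i, (volume (Q i))⁻¹ *
        ∫⁻ x in Q i, ∫⁻ y in Q i, ENNReal.ofReal |f x - f y|) ≤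
      C * (∑' i, volume (Q i)) ^ (1 - 1 / p)}

section AuxTensor

variable {α : Type*} [MeasurableSpace α] {μ : Measure α} {f : α → ℝ}

lemma distFun_antitone : Antitone (distFun μ f) := fun _ _ hab =>
  measure_mono fun _ hx => lt_of_le_of_lt hab hx

lemma distFun_measurable : Measurable (distFun μ f) :=
  (distFun_antitone (μ := μ) (f := f)).measurable

lemma rearr_antitone : Antitone (rearr μ f) := fun _ _ hab =>
  sInf_le_sInf (Set.image_mono fun _ hs =>
    ⟨hs.1, hs.2.trans (ENNReal.ofReal_le_ofReal hab)⟩)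

lemma rearr_le {w s : ℝ} (hw : 0 < w) (h : distFun μ f w ≤ ENNReal.ofReal s) :
    rearr μ f s ≤ ENNReal.ofReal w :=
  sInf_le ⟨w, ⟨hw, h⟩, rfl⟩

lemma le_rearr {u s : ℝ} (h : ENNReal.ofReal s < distFun μ f u) :
    ENNReal.ofReal u ≤ rearr μ f s := by
  refine le_sInf ?_
  rintro _ ⟨w, ⟨hw0, hwle⟩, rfl⟩
  refine ENNReal.ofReal_le_ofReal ?_
  by_contra hlt
  push_neg at hlt
  exact absurd ((distFun_antitone hlt.le).trans hwle) h.not_ge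

lemma distFun_le_of_lt_rearr {u s : ℝ} (h : rearr μ f s < ENNReal.ofReal u) :
    distFun μ f u ≤ ENNReal.ofReal s := by
  by_contra hc
  push_neg at hc
  exact absurd (le_rearr hc) h.not_ge

lemma distFun_iSup (w : ℝ) :
    ⨆ n : ℕ, distFun μ f (w + 1 / ((n : ℝ) + 1)) = distFun μ f w := by
  have hmono : Monotone fun n : ℕ => {x | w + 1 / ((n : ℝ) + 1) < |f x|} := by
    intro n m hnm x hx
    simp only [Set.mem_setOf_eq] at hx ⊢
    have hnm' : (n : ℝ) ≤ m := Nat.cast_le.mpr hnm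
    have h1 : 1 / ((m : ℝ) + 1) ≤ 1 / ((n : ℝ) + 1) := by
      apply one_div_le_one_div_of_le
      · positivity
      · linarith
    linarith
  have hU : {x | w < |f x|} = ⋃ n : ℕ, {x | w + 1 / ((n : ℝ) + 1) < |f x|} := by
    ext x
    simp only [Set.mem_setOf_eq, Set.mem_iUnion]
    constructor
    · intro hx
      obtain ⟨n, hn⟩ := exists_nat_one_div_lt (sub_pos.mpr hx)
      exact ⟨n, by linarith⟩
    · rintro ⟨n, hn⟩
      have hpos : (0:ℝ) < 1 / ((n : ℝ) + 1) := by positivity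
      linarith
  calc (⨆ n : ℕ, distFun μ f (w + 1 / ((n : ℝ) + 1)))
      = ⨆ n : ℕ, μ {x | w + 1 / ((n : ℝ) + 1) < |f x|} := rfl
    _ = μ (⋃ n : ℕ, {x | w + 1 / ((n : ℝ) + 1) < |f x|}) :=
        (hmono.directed_le.measure_iUnion).symm
    _ = distFun μ f w := by rw [← hU]; rfl

lemma vol_ofReal_lt (a : ℝ≥0∞) :
    volume {u : ℝ | 0 < u ∧ ENNReal.ofReal u < a} = a := by
  rcases eq_or_ne a ⊤ with rfl | ha
  · have h : {u : ℝ | 0 < u ∧ ENNReal.ofReal u < ⊤} = Ioi 0 := by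
      ext u; simp [ENNReal.ofReal_lt_top]
    rw [h, Real.volume_Ioi]
  · have h : {u : ℝ | 0 < u ∧ ENNReal.ofReal u < a} = Ioo 0 a.toReal := by
      ext u
      simp only [Set.mem_setOf_eq, Set.mem_Ioo]
      constructor
      · rintro ⟨h1, h2⟩; exact ⟨h1, (ENNReal.ofReal_lt_iff_lt_toReal h1.le ha).mp h2⟩
      · rintro ⟨h1, h2⟩; exact ⟨h1, (ENNReal.ofReal_lt_iff_lt_toReal h1.le ha).mpr h2⟩
    rw [h, Real.volume_Ioo, sub_zero, ENNReal.ofReal_toReal ha]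

lemma layercake {F : ℝ → ℝ≥0∞} (hF : Measurable F) {A : Set ℝ} (hA : MeasurableSet A) :
    ∫⁻ s in A, F s = ∫⁻ u in Ioi (0:ℝ), volume (A ∩ {s | ENNReal.ofReal u < F s}) := by
  have hGm : Measurable fun p : ℝ × ℝ =>
      (if ENNReal.ofReal p.2 < F p.1 then (1:ℝ≥0∞) else 0) := by
    refine Measurable.ite ?_ measurable_const measurable_const
    exact measurableSet_lt (ENNReal.measurable_ofReal.comp measurable_snd)
      (hF.comp measurable_fst)
  have h1 : ∀ s : ℝ,
      (∫⁻ u in Ioi (0:ℝ), if ENNReal.ofReal u < F s then (1:ℝ≥0∞) else 0) = F s := by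
    intro s
    have hBm : MeasurableSet {u : ℝ | ENNReal.ofReal u < F s} :=
      measurableSet_lt ENNReal.measurable_ofReal measurable_const
    have heq : (fun u : ℝ => if ENNReal.ofReal u < F s then (1:ℝ≥0∞) else 0) =
        Set.indicator {u : ℝ | ENNReal.ofReal u < F s} (fun _ => (1:ℝ≥0∞)) := by
      funext u; simp [Set.indicator_apply]
    rw [heq, lintegral_indicator hBm, setLIntegral_one, Measure.restrict_apply hBm]
    rw [show {u : ℝ | ENNReal.ofReal u < F s} ∩ Ioi 0
        = {u : ℝ | 0 < u ∧ ENNReal.ofReal u < F s} by ext u; simp [and_comm]]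
    exact vol_ofReal_lt _
  calc ∫⁻ s in A, F s
      = ∫⁻ s in A, ∫⁻ u in Ioi (0:ℝ),
          (if ENNReal.ofReal u < F s then (1:ℝ≥0∞) else 0) :=
        (lintegral_congr h1).symm
    _ = ∫⁻ u in Ioi (0:ℝ), ∫⁻ s in A,
          (if ENNReal.ofReal u < F s then (1:ℝ≥0∞) else 0) :=
        lintegral_lintegral_swap hGm.aemeasurable
    _ = ∫⁻ u in Ioi (0:ℝ), volume (A ∩ {s | ENNReal.ofReal u < F s}) := by
        refine lintegral_congr fun u => ?_
        have hSm : MeasurableSet {s : ℝ | ENNReal.ofReal u < F s} :=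
          measurableSet_lt measurable_const hF
        have heq : (fun s : ℝ => if ENNReal.ofReal u < F s then (1:ℝ≥0∞) else 0) =
            Set.indicator {s : ℝ | ENNReal.ofReal u < F s} (fun _ => (1:ℝ≥0∞)) := by
          funext s; simp [Set.indicator_apply]
        rw [heq, lintegral_indicator hSm, setLIntegral_one, Measure.restrict_apply hSm,
          Set.inter_comm]

lemma osc_le_oscNorm {t : ℝ} (ht : 0 < t) :
    dstar μ f t - rearr μ f t ≤ oscNorm μ f := by
  unfold oscNorm
  exact le_iSup₂ (f := fun (t' : ℝ) (_ : 0 < t') => dstar μ f t' - rearr μ f t') t ht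

/-- The key single-function inequality: `∫_w^∞ λ_f ≤ ‖f‖_{L(∞,∞)} λ_f(w)`
whenever `λ_f(w) < ∞`. -/
lemma integral_distFun_le (w : ℝ) (hw : 0 < w) (hfin : distFun μ f w ≠ ⊤) :
    ∫⁻ u in Ioi w, distFun μ f u ≤ oscNorm μ f * distFun μ f w := by
  rcases eq_or_ne (distFun μ f w) 0 with h0 | h0
  · have hz : ∀ u ∈ Ioi w, distFun μ f u = 0 := fun u hu =>
      le_antisymm (h0 ▸ distFun_antitone (le_of_lt hu)) zero_le
    rw [setLIntegral_congr_fun measurableSet_Ioi hz]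
    simp
  · set t : ℝ := (distFun μ f w).toReal with ht_def
    have ht : 0 < t := ENNReal.toReal_pos h0 hfin
    have hoft : ENNReal.ofReal t = distFun μ f w := ENNReal.ofReal_toReal hfin
    set r := rearr μ f t with hr_def
    have hrw : r ≤ ENNReal.ofReal w := rearr_le hw (le_of_eq hoft.symm)
    have hrtop : r ≠ ⊤ := (lt_of_le_of_lt hrw ENNReal.ofReal_lt_top).ne
    have hofr : ENNReal.ofReal r.toReal = r := ENNReal.ofReal_toReal hrtop
    have hrT_le_w : r.toReal ≤ w := ENNReal.toReal_le_of_le_ofReal hw.le hrw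
    set V : ℝ → ℝ≥0∞ :=
      fun u => volume (Ioc (0:ℝ) t ∩ {s | ENNReal.ofReal u < rearr μ f s}) with hV_def
    have hVanti : Antitone V := fun a b hab =>
      measure_mono (Set.inter_subset_inter_right _
        fun s hs => lt_of_le_of_lt (ENNReal.ofReal_le_ofReal hab) hs)
    have hVmeas : Measurable V := hVanti.measurable
    have hlayer : ∫⁻ s in Ioc (0:ℝ) t, rearr μ f s = ∫⁻ u in Ioi (0:ℝ), V u :=
      layercake rearr_antitone.measurable measurableSet_Ioc
    have hreg1 : ENNReal.ofReal t * r ≤ ∫⁻ u in Ioo (0:ℝ) r.toReal, V u := by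
      have hsub : ∀ u ∈ Ioo (0:ℝ) r.toReal, ENNReal.ofReal t ≤ V u := by
        intro u hu
        have hsub2 : Ioc (0:ℝ) t ⊆ Ioc 0 t ∩ {s | ENNReal.ofReal u < rearr μ f s} := by
          intro s hs
          refine ⟨hs, ?_⟩
          have h1 : ENNReal.ofReal u < r := by
            rw [← hofr]
            exact (ENNReal.ofReal_lt_ofReal_iff (hu.1.trans hu.2)).mpr hu.2
          exact lt_of_lt_of_le h1 (rearr_antitone hs.2)
        calc ENNReal.ofReal t = volume (Ioc (0:ℝ) t) := by rw [Real.volume_Ioc, sub_zero]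
          _ ≤ V u := measure_mono hsub2
      calc ENNReal.ofReal t * r
          = ENNReal.ofReal t * volume (Ioo (0:ℝ) r.toReal) := by
            rw [Real.volume_Ioo, sub_zero, hofr]
        _ = ∫⁻ _ in Ioo (0:ℝ) r.toReal, ENNReal.ofReal t := (setLIntegral_const _ _).symm
        _ ≤ ∫⁻ u in Ioo (0:ℝ) r.toReal, V u := setLIntegral_mono hVmeas hsub
    have hreg2 : ∫⁻ u in Ioi w, distFun μ f u ≤ ∫⁻ u in Ioi w, V u := by
      refine setLIntegral_mono hVmeas ?_
      intro u hu
      have hwu : w < u := hu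
      rw [← distFun_iSup u]
      refine iSup_le fun n => ?_
      set u' := u + 1 / ((n : ℝ) + 1) with hu'_def
      have hu'pos : u < u' := lt_add_of_pos_right _ (by positivity)
      have hcle : distFun μ f u' ≤ ENNReal.ofReal t := by
        rw [hoft]; exact distFun_antitone (le_of_lt (hwu.trans hu'pos))
      have hcfin : distFun μ f u' ≠ ⊤ := (lt_of_le_of_lt hcle ENNReal.ofReal_lt_top).ne
      set c := distFun μ f u' with hc_def
      have hsub : Ioo (0:ℝ) c.toReal ⊆ Ioc 0 t ∩ {s | ENNReal.ofReal u < rearr μ f s} := by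
        intro s hs
        have hsc : ENNReal.ofReal s < c := by
          rw [← ENNReal.ofReal_toReal hcfin]
          exact (ENNReal.ofReal_lt_ofReal_iff (hs.1.trans hs.2)).mpr hs.2
        have hsle : s ≤ t :=
          hs.2.le.trans (ENNReal.toReal_le_of_le_ofReal ht.le hcle)
        refine ⟨⟨hs.1, hsle⟩, ?_⟩
        refine lt_of_lt_of_le ?_ (le_rearr hsc)
        exact (ENNReal.ofReal_lt_ofReal_iff (lt_trans (hw.trans hwu) hu'pos)).mpr hu'pos
      calc distFun μ f u' = ENNReal.ofReal c.toReal := (ENNReal.ofReal_toReal hcfin).symm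
        _ = volume (Ioo (0:ℝ) c.toReal) := by rw [Real.volume_Ioo, sub_zero]
        _ ≤ V u := measure_mono hsub
    have hdisj : Disjoint (Ioo (0:ℝ) r.toReal) (Ioi w) := by
      rw [Set.disjoint_left]
      intro u hu hu'
      exact absurd hu' (not_lt.mpr (hu.2.le.trans hrT_le_w))
    have hunion : (∫⁻ u in Ioo (0:ℝ) r.toReal, V u) + ∫⁻ u in Ioi w, V u
        ≤ ∫⁻ u in Ioi (0:ℝ), V u := by
      rw [← lintegral_union measurableSet_Ioi hdisj]
      exact lintegral_mono_set
        (Set.union_subset (fun u hu => hu.1) (fun u hu => hw.trans hu))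
    have hkey : ENNReal.ofReal t * r + ∫⁻ u in Ioi w, distFun μ f u
        ≤ dstar μ f t * ENNReal.ofReal t := by
      have h1 : ∫⁻ s in Ioc (0:ℝ) t, rearr μ f s = dstar μ f t * ENNReal.ofReal t := by
        rw [dstar, ENNReal.div_mul_cancel (ENNReal.ofReal_pos.mpr ht).ne'
          ENNReal.ofReal_ne_top]
      calc ENNReal.ofReal t * r + ∫⁻ u in Ioi w, distFun μ f u
          ≤ (∫⁻ u in Ioo (0:ℝ) r.toReal, V u) + ∫⁻ u in Ioi w, V u :=
            add_le_add hreg1 hreg2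
        _ ≤ ∫⁻ u in Ioi (0:ℝ), V u := hunion
        _ = ∫⁻ s in Ioc (0:ℝ) t, rearr μ f s := hlayer.symm
        _ = dstar μ f t * ENNReal.ofReal t := h1
    have h2 : ∫⁻ u in Ioi w, distFun μ f u
        ≤ dstar μ f t * ENNReal.ofReal t - ENNReal.ofReal t * r :=
      ENNReal.le_sub_of_add_le_left
        (ENNReal.mul_ne_top ENNReal.ofReal_ne_top hrtop) hkey
    calc ∫⁻ u in Ioi w, distFun μ f u
        ≤ dstar μ f t * ENNReal.ofReal t - ENNReal.ofReal t * r := h2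
      _ = (dstar μ f t - r) * ENNReal.ofReal t := by
          rw [ENNReal.sub_mul fun _ _ => ENNReal.ofReal_ne_top,
            mul_comm r (ENNReal.ofReal t)]
      _ ≤ oscNorm μ f * ENNReal.ofReal t := mul_le_mul_left (osc_le_oscNorm ht) _
      _ = oscNorm μ f * distFun μ f w := by rw [hoft]

/-- Layer-cake upper bound for the truncated integral of the rearrangement. -/
lemma integral_rearr_le (T v : ℝ) (hT : 0 < T) (hv : 0 < v)
    (hvr : rearr μ f T ≤ ENNReal.ofReal v) :
    ∫⁻ s in Ioc (0:ℝ) T, rearr μ f s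
      ≤ ENNReal.ofReal T * ENNReal.ofReal v + ∫⁻ u in Ioi v, distFun μ f u := by
  rw [layercake rearr_antitone.measurable measurableSet_Ioc]
  set V : ℝ → ℝ≥0∞ :=
    fun u => volume (Ioc (0:ℝ) T ∩ {s | ENNReal.ofReal u < rearr μ f s}) with hV_def
  have hsplit : Ioi (0:ℝ) = Ioc 0 v ∪ Ioi v := (Ioc_union_Ioi_eq_Ioi hv.le).symm
  have hdisj : Disjoint (Ioc (0:ℝ) v) (Ioi v) := by
    rw [Set.disjoint_left]
    intro u hu hu'
    exact absurd hu' (not_lt.mpr hu.2)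
  rw [hsplit, lintegral_union measurableSet_Ioi hdisj]
  refine add_le_add ?_ ?_
  · calc ∫⁻ u in Ioc (0:ℝ) v, V u
        ≤ ∫⁻ _ in Ioc (0:ℝ) v, ENNReal.ofReal T := by
          refine setLIntegral_mono measurable_const fun u _ => ?_
          calc V u ≤ volume (Ioc (0:ℝ) T) := measure_mono Set.inter_subset_left
            _ = ENNReal.ofReal T := by rw [Real.volume_Ioc, sub_zero]
      _ = ENNReal.ofReal T * ENNReal.ofReal v := by
          rw [setLIntegral_const, Real.volume_Ioc, sub_zero]
  · refine setLIntegral_mono distFun_measurable fun u hu => ?_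
    have hu0 : 0 < u := hv.trans hu
    calc V u ≤ volume {s : ℝ | 0 < s ∧ ENNReal.ofReal s < distFun μ f u} := by
          refine measure_mono ?_
          rintro s ⟨hs1, hs2⟩
          refine ⟨hs1.1, ?_⟩
          by_contra hc
          push_neg at hc
          exact absurd (rearr_le hu0 hc) (not_le.mpr hs2)
      _ = distFun μ f u := vol_ofReal_lt _

lemma lintegral_Ioi_div {F : ℝ → ℝ≥0∞} (hF : Measurable F) (v : ℝ) {c : ℝ} (hc : 0 < c) :
    ∫⁻ u in Ioi v, F (u / c) = ENNReal.ofReal c * ∫⁻ s in Ioi (v / c), F s := by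
  have hmap : Measure.map (fun s : ℝ => c * s) volume = ENNReal.ofReal |c⁻¹| • volume :=
    Real.map_volume_mul_left hc.ne'
  have hone : ENNReal.ofReal c * ENNReal.ofReal |c⁻¹| = 1 := by
    rw [abs_of_pos (inv_pos.mpr hc), ← ENNReal.ofReal_mul hc.le, mul_inv_cancel₀ hc.ne',
      ENNReal.ofReal_one]
  have hpre : (fun s : ℝ => c * s) ⁻¹' Ioi v = Ioi (v / c) := by
    ext s
    simp only [Set.mem_preimage, Set.mem_Ioi]
    rw [div_lt_iff₀ hc, mul_comm s c]
  calc ∫⁻ u in Ioi v, F (u / c)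
      = ENNReal.ofReal c * (ENNReal.ofReal |c⁻¹| * ∫⁻ u in Ioi v, F (u / c)) := by
        rw [← mul_assoc, hone, one_mul]
    _ = ENNReal.ofReal c * ∫⁻ u in Ioi v, F (u / c)
          ∂(ENNReal.ofReal |c⁻¹| • volume) := by
        rw [Measure.restrict_smul, lintegral_smul_measure, smul_eq_mul]
    _ = ENNReal.ofReal c * ∫⁻ u in Ioi v, F (u / c)
          ∂(Measure.map (fun s : ℝ => c * s) volume) := by rw [hmap]
    _ = ENNReal.ofReal c * ∫⁻ s in (fun s : ℝ => c * s) ⁻¹' Ioi v, F ((c * s) / c) := by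
        have hgm : Measurable fun s : ℝ => c * s := by fun_prop
        rw [setLIntegral_map (f := fun u : ℝ => F (u / c)) (g := fun s : ℝ => c * s)
          measurableSet_Ioi (hF.comp (measurable_id.div_const c)) hgm]
    _ = ENNReal.ofReal c * ∫⁻ s in Ioi (v / c), F s := by
        rw [hpre]
        exact congrArg _ (lintegral_congr fun s => by rw [mul_div_cancel_left₀ _ hc.ne'])

/-- Single-`y` estimate for the tensor product. -/
lemma key_prod_y {c v : ℝ} (hc0 : 0 ≤ c) (hv : 0 < v) {M : ℝ≥0∞}
    (hcM : ENNReal.ofReal c ≤ M) (hfin : μ {x | v < |f x| * c} ≠ ⊤) :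
    ∫⁻ u in Ioi v, μ {x | u < |f x| * c}
      ≤ oscNorm μ f * M * μ {x | v < |f x| * c} := by
  rcases hc0.lt_or_eq with hcpos | hceq
  · have hset : ∀ u : ℝ, {x | u < |f x| * c} = {x | u / c < |f x|} := by
      intro u; ext x
      simp only [Set.mem_setOf_eq]
      rw [div_lt_iff₀ hcpos]
    have hfin' : distFun μ f (v / c) ≠ ⊤ := by
      rw [show distFun μ f (v / c) = μ {x | v / c < |f x|} from rfl, ← hset v]
      exact hfin
    calc ∫⁻ u in Ioi v, μ {x | u < |f x| * c}
        = ∫⁻ u in Ioi v, distFun μ f (u / c) := by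
          refine lintegral_congr fun u => ?_
          rw [show distFun μ f (u / c) = μ {x | u / c < |f x|} from rfl, ← hset u]
      _ = ENNReal.ofReal c * ∫⁻ s in Ioi (v / c), distFun μ f s :=
          lintegral_Ioi_div distFun_measurable v hcpos
      _ ≤ ENNReal.ofReal c * (oscNorm μ f * distFun μ f (v / c)) :=
          mul_le_mul_right (integral_distFun_le (v / c) (div_pos hv hcpos) hfin') _
      _ ≤ M * (oscNorm μ f * distFun μ f (v / c)) := mul_le_mul_left hcM _
      _ = oscNorm μ f * M * μ {x | v < |f x| * c} := by
          rw [show distFun μ f (v / c) = μ {x | v / c < |f x|} from rfl, ← hset v]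
          ring
  · have hz : ∀ u ∈ Ioi v, μ {x | u < |f x| * c} = 0 := by
      intro u hu
      have he : {x | u < |f x| * c} = (∅ : Set α) := by
        ext x
        simp only [Set.mem_setOf_eq, Set.mem_empty_iff_false, iff_false, not_lt, ← hceq,
          mul_zero]
        exact (hv.trans hu).le
      rw [he, measure_empty]
    rw [setLIntegral_congr_fun measurableSet_Ioi hz]
    simp

end AuxTensor

section ProdAux

variable {α β : Type*} [MeasurableSpace α] [MeasurableSpace β]

/-- The tensor-product estimate on distribution functions. -/
lemma key_prod (μ : Measure α) (ν : Measure β) [SigmaFinite μ] [SigmaFinite ν]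
    (f : α → ℝ) (g : β → ℝ) (hf : Measurable f) (hg : Measurable g)
    (hgL : eLpNorm g ⊤ ν ≠ ⊤) {v : ℝ} (hv : 0 < v)
    (hfin : distFun (μ.prod ν) (fun q => f q.1 * g q.2) v ≠ ⊤) :
    ∫⁻ u in Ioi v, distFun (μ.prod ν) (fun q => f q.1 * g q.2) u
      ≤ oscNorm μ f * eLpNorm g ⊤ ν
        * distFun (μ.prod ν) (fun q => f q.1 * g q.2) v := by
  set M := eLpNorm g ⊤ ν with hM_def
  have hmeas : ∀ u : ℝ, MeasurableSet {q : α × β | u < |f q.1 * g q.2|} := fun u =>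
    measurableSet_lt measurable_const
      ((hf.comp measurable_fst).mul (hg.comp measurable_snd)).abs
  have hprod : ∀ u : ℝ, distFun (μ.prod ν) (fun q => f q.1 * g q.2) u
      = ∫⁻ y, μ {x | u < |f x| * |g y|} ∂ν := by
    intro u
    rw [show distFun (μ.prod ν) (fun q => f q.1 * g q.2) u
        = (μ.prod ν) {q : α × β | u < |f q.1 * g q.2|} from rfl,
      Measure.prod_apply_symm (hmeas u)]
    refine lintegral_congr fun y => ?_
    congr 1
    ext x
    simp [abs_mul]
  have hmble : ∀ w : ℝ, Measurable fun y => μ {x | w < |f x| * |g y|} := by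
    intro w
    have hS : MeasurableSet {p : β × α | w < |f p.2| * |g p.1|} :=
      measurableSet_lt measurable_const
        ((hf.comp measurable_snd).abs.mul ((hg.comp measurable_fst).abs))
    exact measurable_measure_prodMk_left hS
  have hae1 : ∀ᵐ y ∂ν, ENNReal.ofReal |g y| ≤ M := by
    have h := enorm_ae_le_eLpNormEssSup g ν
    rw [hM_def, eLpNorm_exponent_top]
    filter_upwards [h] with y hy
    rw [← Real.enorm_eq_ofReal_abs]
    exact hy
  have hae2 : ∀ᵐ y ∂ν, μ {x | v < |f x| * |g y|} ≠ ⊤ := by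
    have hint : ∫⁻ y, μ {x | v < |f x| * |g y|} ∂ν ≠ ⊤ := by
      rw [← hprod v]; exact hfin
    filter_upwards [ae_lt_top (hmble v) hint] with y hy
    exact hy.ne
  have hunc : Measurable (Function.uncurry
      fun (u : ℝ) (y : β) => μ {x | u < |f x| * |g y|}) := by
    have hS : MeasurableSet {p : (ℝ × β) × α | p.1.1 < |f p.2| * |g p.1.2|} :=
      measurableSet_lt (measurable_fst.comp measurable_fst)
        ((hf.comp measurable_snd).abs.mul
          ((hg.comp (measurable_snd.comp measurable_fst)).abs))
    exact measurable_measure_prodMk_left hS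
  calc ∫⁻ u in Ioi v, distFun (μ.prod ν) (fun q => f q.1 * g q.2) u
      = ∫⁻ u in Ioi v, ∫⁻ y, μ {x | u < |f x| * |g y|} ∂ν :=
        lintegral_congr fun u => hprod u
    _ = ∫⁻ y, (∫⁻ u in Ioi v, μ {x | u < |f x| * |g y|}) ∂ν :=
        lintegral_lintegral_swap hunc.aemeasurable
    _ ≤ ∫⁻ y, oscNorm μ f * M * μ {x | v < |f x| * |g y|} ∂ν := by
        refine lintegral_mono_ae ?_
        filter_upwards [hae1, hae2] with y h1 h2
        exact key_prod_y (abs_nonneg _) hv h1 h2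
    _ = oscNorm μ f * M * ∫⁻ y, μ {x | v < |f x| * |g y|} ∂ν :=
        lintegral_const_mul _ (hmble v)
    _ = oscNorm μ f * M * distFun (μ.prod ν) (fun q => f q.1 * g q.2) v := by
        rw [hprod v]

end ProdAux

/-- `L(∞,∞)(Ω₁) ⊗ L^∞(Ω₂) ⊂ L(∞,∞)(Ω₁ × Ω₂)`, with
`‖f ⊗ g‖_{L(∞,∞)(Ω₁×Ω₂)} ≤ ‖f‖_{L(∞,∞)(Ω₁)} ‖g‖_{L^∞(Ω₂)}`. -/
theorem tensor_linftyinfty {α β : Type*} [MeasurableSpace α] [MeasurableSpace β]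
    (μ : Measure α) (ν : Measure β) [SigmaFinite μ] [SigmaFinite ν]
    (f : α → ℝ) (g : β → ℝ) (hf : Measurable f) (hg : Measurable g)
    (hfw : oscNorm μ f ≠ ⊤) (hgL : eLpNorm g ⊤ ν ≠ ⊤) :
    oscNorm (μ.prod ν) (fun q => f q.1 * g q.2) ≠ ⊤ ∧
      oscNorm (μ.prod ν) (fun q => f q.1 * g q.2) ≤ oscNorm μ f * eLpNorm g ⊤ ν := by
  have hCM : oscNorm μ f * eLpNorm g ⊤ ν ≠ ⊤ := ENNReal.mul_ne_top hfw hgL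
  have main : oscNorm (μ.prod ν) (fun q => f q.1 * g q.2)
      ≤ oscNorm μ f * eLpNorm g ⊤ ν := by
    unfold oscNorm
    refine iSup₂_le fun T hT => ?_
    rcases eq_or_ne (rearr (μ.prod ν) (fun q => f q.1 * g q.2) T) ⊤ with hr | hr
    · rw [hr, ENNReal.sub_top]
      exact zero_le
    · refine ENNReal.le_of_forall_pos_le_add fun ε hε _ => ?_
      set r := rearr (μ.prod ν) (fun q => f q.1 * g q.2) T with hr_def
      set v : ℝ := r.toReal + (ε : ℝ) with hv_def
      have hεpos : (0:ℝ) < (ε : ℝ) := hε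
      have hv0 : 0 < v := add_pos_of_nonneg_of_pos ENNReal.toReal_nonneg hεpos
      have hrv : r < ENNReal.ofReal v := by
        rw [← ENNReal.ofReal_toReal hr]
        exact (ENNReal.ofReal_lt_ofReal_iff hv0).mpr (lt_add_of_pos_right _ hεpos)
      have hlam : distFun (μ.prod ν) (fun q => f q.1 * g q.2) v ≤ ENNReal.ofReal T :=
        distFun_le_of_lt_rearr hrv
      have hlamfin : distFun (μ.prod ν) (fun q => f q.1 * g q.2) v ≠ ⊤ :=
        (lt_of_le_of_lt hlam ENNReal.ofReal_lt_top).ne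
      have hP : ∫⁻ u in Ioi v, distFun (μ.prod ν) (fun q => f q.1 * g q.2) u
          ≤ oscNorm μ f * eLpNorm g ⊤ ν * ENNReal.ofReal T :=
        (key_prod μ ν f g hf hg hgL hv0 hlamfin).trans (mul_le_mul_right hlam _)
      have hB := integral_rearr_le T v hT hv0 hrv.le
      have hI : ∫⁻ s in Ioc (0:ℝ) T, rearr (μ.prod ν) (fun q => f q.1 * g q.2) s
          ≤ ENNReal.ofReal T * (ENNReal.ofReal v + oscNorm μ f * eLpNorm g ⊤ ν) := by
        calc ∫⁻ s in Ioc (0:ℝ) T, rearr (μ.prod ν) (fun q => f q.1 * g q.2) s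
            ≤ ENNReal.ofReal T * ENNReal.ofReal v
              + ∫⁻ u in Ioi v, distFun (μ.prod ν) (fun q => f q.1 * g q.2) u := hB
          _ ≤ ENNReal.ofReal T * ENNReal.ofReal v
              + oscNorm μ f * eLpNorm g ⊤ ν * ENNReal.ofReal T := add_le_add_right hP _
          _ = ENNReal.ofReal T * (ENNReal.ofReal v + oscNorm μ f * eLpNorm g ⊤ ν) := by
              ring
      have hd : dstar (μ.prod ν) (fun q => f q.1 * g q.2) T
          ≤ ENNReal.ofReal v + oscNorm μ f * eLpNorm g ⊤ ν := by
        rw [show dstar (μ.prod ν) (fun q => f q.1 * g q.2) T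
            = (∫⁻ s in Ioc (0:ℝ) T, rearr (μ.prod ν) (fun q => f q.1 * g q.2) s)
              / ENNReal.ofReal T from rfl]
        refine ENNReal.div_le_of_le_mul ?_
        rw [mul_comm]
        exact hI
      have hveq : ENNReal.ofReal v = r + (ε : ℝ≥0∞) := by
        rw [hv_def, ENNReal.ofReal_add ENNReal.toReal_nonneg hεpos.le,
          ENNReal.ofReal_toReal hr, ENNReal.ofReal_coe_nnreal]
      calc dstar (μ.prod ν) (fun q => f q.1 * g q.2) T - r
          ≤ (ENNReal.ofReal v + oscNorm μ f * eLpNorm g ⊤ ν) - r :=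
            tsub_le_tsub_right hd r
        _ = (r + (oscNorm μ f * eLpNorm g ⊤ ν + (ε : ℝ≥0∞))) - r := by
            rw [hveq]; ring_nf
        _ = oscNorm μ f * eLpNorm g ⊤ ν + (ε : ℝ≥0∞) := by
            rw [ENNReal.add_sub_cancel_left hr]
  exact ⟨ne_top_of_le_ne_top hCM main, main⟩
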